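/- A c.e. set A is Turing complete (∅' ≤_T A) if and only if A computes a fixed point free function, i.e. a total function f with W_{f(n)} ≠ W_n for all n. -/

import Mathlib

/-- The `e`-th partial computable function in a standard numbering
satisfying the S-m-n theorem. -/
def phi (e : ℕ) : ℕ →. ℕ := (Denumerable.ofNat Nat.Partrec.Code e).eval

/-- The `e`-th computably enumerable set `W e = dom (phi e)`. -/
def W (e : ℕ) : Set ℕ := {n | (phi e n).Dom}

/-- Partial functions computable relative to an oracle `O`. -/
inductive RecursiveInSingle (O : ℕ →. ℕ) : (ℕ →. ℕ) → Prop
  | oracle : RecursiveInSingle O O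
  | zero : RecursiveInSingle O (pure 0)
  | succ : RecursiveInSingle O Nat.succ
  | left : RecursiveInSingle O ↑fun n : ℕ => n.unpair.1
  | right : RecursiveInSingle O ↑fun n : ℕ => n.unpair.2
  | pair {f g} : RecursiveInSingle O f → RecursiveInSingle O g →
      RecursiveInSingle O fun n => Nat.pair <$> f n <*> g n
  | comp {f g} : RecursiveInSingle O f → RecursiveInSingle O g → RecursiveInSingle O fun n => g n >>= f
  | prec {f g} : RecursiveInSingle O f → RecursiveInSingle O g → RecursiveInSingle O (Nat.unpaired fun a n =>
      n.rec (f a) fun y IH => do let i ← IH; g (Nat.pair a (Nat.pair y i)))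
  | rfind {f} : RecursiveInSingle O f →
      RecursiveInSingle O fun a => Nat.rfind fun n => (fun m => m = 0) <$> f (Nat.pair a n)

open scoped Classical in
/-- The characteristic function of a set, as an oracle. -/
noncomputable def charFn (A : Set ℕ) : ℕ →. ℕ := fun n => Part.some (if n ∈ A then 1 else 0)

/-- Turing reducibility for sets: `A ≤_T B`. -/
def TuringRed (A B : Set ℕ) : Prop := RecursiveInSingle (charFn B) (charFn A)

/-- `A` computes the total function `f`, i.e. `f ≤_T A`. -/
def FunRecIn (A : Set ℕ) (f : ℕ → ℕ) : Prop := RecursiveInSingle (charFn A) fun n => Part.some (f n)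

/-- The halting set ∅′. -/
def Khalt : Set ℕ := {n | (phi n n).Dom}

open Nat.Partrec (Code) in
theorem RecursiveInSingle.of_partrec {O f : ℕ →. ℕ} (h : Nat.Partrec f) : RecursiveInSingle O f := by
  induction h with
  | zero => exact .zero
  | succ => exact .succ
  | left => exact .left
  | right => exact .right
  | pair _ _ hf hg => exact .pair hf hg
  | comp _ _ hf hg => exact .comp hf hg
  | prec _ _ hf hg => exact .prec hf hg
  | rfind _ hf => exact .rfind hf

theorem RecursiveInSingle.of_eq {O f g : ℕ →. ℕ} (h : RecursiveInSingle O f) (e : ∀ n, f n = g n) :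
    RecursiveInSingle O g := (funext e : f = g) ▸ h

theorem RecursiveInSingle.of_computable {O : ℕ →. ℕ} {g : ℕ → ℕ} (hg : Computable g) :
    RecursiveInSingle O (fun n => Part.some (g n)) := by
  have := RecursiveInSingle.of_partrec (O := O) (Partrec.nat_iff.1 hg)
  exact this.of_eq fun n => rfl

theorem RecursiveInSingle.trans {O O' f : ℕ →. ℕ} (hf : RecursiveInSingle O f) (hO : RecursiveInSingle O' O) :
    RecursiveInSingle O' f := by
  induction hf with
  | oracle => exact hO
  | zero => exact .zero
  | succ => exact .succ
  | left => exact .left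
  | right => exact .right
  | pair _ _ hf hg => exact .pair hf hg
  | comp _ _ hf hg => exact .comp hf hg
  | prec _ _ hf hg => exact .prec hf hg
  | rfind _ hf => exact .rfind hf

/-- compose an A-recursive function with a computable one on the inside -/
theorem RecursiveInSingle.comp_computable {O f : ℕ →. ℕ} (hf : RecursiveInSingle O f) {g : ℕ → ℕ}
    (hg : Computable g) : RecursiveInSingle O (fun n => f (g n)) := by
  have := RecursiveInSingle.comp hf (RecursiveInSingle.of_computable (O := O) hg)
  exact this.of_eq fun n => Part.bind_some (g n) f

/-- post-compose with a computable total map -/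
theorem RecursiveInSingle.map_computable {O f : ℕ →. ℕ} (hf : RecursiveInSingle O f) {g : ℕ → ℕ}
    (hg : Computable g) : RecursiveInSingle O (fun n => (f n).map g) := by
  have := RecursiveInSingle.comp (RecursiveInSingle.of_computable (O := O) hg) hf
  exact this.of_eq fun n => by
    ext a; simp [Part.mem_map_iff, Part.mem_bind_iff, eq_comm]

/-- pairing of two A-recursive functions -/
theorem RecursiveInSingle.pair_pure {O : ℕ →. ℕ} {f g : ℕ → ℕ}
    (hf : RecursiveInSingle O (fun n => Part.some (f n))) (hg : RecursiveInSingle O (fun n => Part.some (g n))) :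
    RecursiveInSingle O (fun n => Part.some (Nat.pair (f n) (g n))) := by
  have := RecursiveInSingle.pair hf hg
  exact this.of_eq fun n => by simp [Seq.seq]

open Nat.Partrec (Code)
open Nat.Partrec.Code

def dcode : Code := Code.rfind' (Code.comp Code.succ Code.zero)

theorem dcode_not_dom : ∀ n, ¬ (dcode.eval n).Dom := by
  intro n h
  rw [Part.dom_iff_mem] at h
  obtain ⟨m, hm⟩ := h
  simp [dcode, Code.eval, Seq.seq] at hm
  obtain ⟨a, ha, -⟩ := hm
  obtain ⟨_, h⟩ := (Nat.mem_rfind.1 ha).1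
  exact Bool.false_ne_true h

def hcode (n : ℕ) : ℕ := Encodable.encode (Code.comp (Denumerable.ofNat Code n) Code.zero)

theorem hcode_computable : Computable hcode := by
  have : Primrec (fun n => Code.comp (Denumerable.ofNat Code n) Code.zero) :=
    primrec₂_comp.comp (Primrec.ofNat Code) (Primrec.const Code.zero)
  exact (Primrec.encode.comp this).to_comp

theorem phi_hcode (n m : ℕ) : phi (hcode n) m = phi n 0 := by
  simp only [phi, hcode, Denumerable.ofNat_encode]
  simp [Code.eval]
  rw [show (pure 0 : ℕ →. ℕ) m = Part.some 0 from rfl]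
  exact Part.bind_some _ _

theorem hcode_Khalt (n : ℕ) : hcode n ∈ Khalt ↔ 0 ∈ W n := by
  simp [Khalt, W, phi_hcode]

open scoped Classical in
noncomputable def fpfF (n : ℕ) : ℕ :=
  if hcode n ∈ Khalt then Encodable.encode dcode else Encodable.encode Code.zero

theorem W_dcode : W (Encodable.encode dcode) = ∅ := by
  ext m
  simp [W, phi, Denumerable.ofNat_encode]
  exact dcode_not_dom m

theorem W_zerocode : W (Encodable.encode Code.zero) = Set.univ := by
  ext m
  simp [W, phi, Denumerable.ofNat_encode, Code.eval]
  exact trivial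

theorem fpfF_fpf (n : ℕ) : W (fpfF n) ≠ W n := by
  by_cases h : hcode n ∈ Khalt
  · have h0 : 0 ∈ W n := (hcode_Khalt n).1 h
    simp only [fpfF, if_pos h, W_dcode]
    intro he; rw [← he] at h0; exact h0
  · have h0 : 0 ∉ W n := fun hh => h ((hcode_Khalt n).2 hh)
    simp only [fpfF, if_neg h, W_zerocode]
    intro he; rw [← he] at h0; exact h0 trivial

inductive OCode
  | oracle | zero | succ | left | right
  | pair (cf cg : OCode) | comp (cf cg : OCode) | prec (cf cg : OCode) | rfind (cf : OCode)

def evalo (O : ℕ →. ℕ) : OCode → ℕ →. ℕ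
  | .oracle => O
  | .zero => pure 0
  | .succ => Nat.succ
  | .left => fun n => n.unpair.1
  | .right => fun n => n.unpair.2
  | .pair cf cg => fun n => Nat.pair <$> evalo O cf n <*> evalo O cg n
  | .comp cf cg => fun n => evalo O cg n >>= evalo O cf
  | .prec cf cg => Nat.unpaired fun a n =>
      n.rec (evalo O cf a) fun y IH => do let i ← IH; evalo O cg (Nat.pair a (Nat.pair y i))
  | .rfind cf => fun a => Nat.rfind fun n => (fun m => m = 0) <$> evalo O cf (Nat.pair a n)

theorem exists_ocode {O f : ℕ →. ℕ} (h : RecursiveInSingle O f) : ∃ c : OCode, evalo O c = f := by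
  induction h with
  | oracle => exact ⟨.oracle, rfl⟩
  | zero => exact ⟨.zero, rfl⟩
  | succ => exact ⟨.succ, rfl⟩
  | left => exact ⟨.left, rfl⟩
  | right => exact ⟨.right, rfl⟩
  | pair _ _ hf hg =>
      obtain ⟨cf, rfl⟩ := hf; obtain ⟨cg, rfl⟩ := hg; exact ⟨.pair cf cg, rfl⟩
  | comp _ _ hf hg =>
      obtain ⟨cf, rfl⟩ := hf; obtain ⟨cg, rfl⟩ := hg; exact ⟨.comp cf cg, rfl⟩
  | prec _ _ hf hg =>
      obtain ⟨cf, rfl⟩ := hf; obtain ⟨cg, rfl⟩ := hg; exact ⟨.prec cf cg, rfl⟩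
  | rfind _ hf =>
      obtain ⟨cf, rfl⟩ := hf; exact ⟨.rfind cf, rfl⟩


theorem evalo_mono {O O' : ℕ →. ℕ} (h : ∀ n a, a ∈ O n → a ∈ O' n) :
    ∀ (c : OCode) (n a), a ∈ evalo O c n → a ∈ evalo O' c n := by
  intro c
  induction c with
  | oracle => exact h
  | zero => exact fun n a => id
  | succ => exact fun n a => id
  | left => exact fun n a => id
  | right => exact fun n a => id
  | pair cf cg ihf ihg =>
      intro n a ha
      simp only [evalo] at ha ⊢
      simp [Seq.seq] at ha ⊢
      obtain ⟨x, hx, y, hy, rfl⟩ := ha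
      exact ⟨x, ihf _ _ hx, y, ihg _ _ hy, rfl⟩
  | comp cf cg ihf ihg =>
      intro n a ha
      simp only [evalo] at ha ⊢
      have ha := Part.mem_bind_iff.1 ha; refine Part.mem_bind_iff.2 ?_
      obtain ⟨x, hx, hax⟩ := ha
      exact ⟨x, ihg _ _ hx, ihf _ _ hax⟩
  | prec cf cg ihf ihg =>
      intro n a
      simp only [evalo, Nat.unpaired]
      generalize n.unpair.2 = m
      induction m generalizing a with
      | zero => exact ihf _ _
      | succ m ih =>
          intro ha
          simp only [Part.bind_eq_bind, Part.mem_bind_iff] at ha ⊢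
          obtain ⟨i, hi, hia⟩ := ha
          exact ⟨i, ih _ hi, ihg _ _ hia⟩
  | rfind cf ihf =>
      intro n a ha
      simp only [evalo] at ha ⊢
      have ha := Nat.mem_rfind.1 ha; refine Nat.mem_rfind.2 ?_
      obtain ⟨h1, h2⟩ := ha
      constructor
      · simp only [Part.map_eq_map, Part.mem_map_iff] at h1 ⊢
        obtain ⟨x, hx, hx0⟩ := h1
        exact ⟨x, ihf _ _ hx, hx0⟩
      · intro m hm
        have h3 := h2 hm
        simp only [Part.map_eq_map, Part.mem_map_iff] at h3 ⊢
        obtain ⟨x, hx, hx0⟩ := h3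
        exact ⟨x, ihf _ _ hx, hx0⟩

theorem exists_uniform_bound {P : ℕ → ℕ → Prop}
    (mono : ∀ m l l', l ≤ l' → P m l → P m l') :
    ∀ b, (∀ m, m ≤ b → ∃ l, P m l) → ∃ L, ∀ m, m ≤ b → P m L := by
  intro b
  induction b with
  | zero =>
      intro h
      obtain ⟨l, hl⟩ := h 0 le_rfl
      exact ⟨l, fun m hm => by rw [Nat.le_zero.1 hm]; exact hl⟩
  | succ b ih =>
      intro h
      obtain ⟨L, hL⟩ := ih fun m hm => h m (hm.trans (Nat.le_succ b))
      obtain ⟨l, hl⟩ := h (b + 1) le_rfl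
      refine ⟨max L l, fun m hm => ?_⟩
      rcases Nat.le_succ_iff.1 hm with h' | h'
      · exact mono _ _ _ (le_max_left _ _) (hL m h')
      · exact mono _ _ _ (le_max_right _ _) (h' ▸ hl)

theorem evalo_compact {O : ℕ →. ℕ} {Ol : ℕ → ℕ →. ℕ}
    (hmono : ∀ l l', l ≤ l' → ∀ n a, a ∈ Ol l n → a ∈ Ol l' n)
    (hlim : ∀ n a, a ∈ O n → ∃ l, a ∈ Ol l n) :
    ∀ (c : OCode) (n a), a ∈ evalo O c n → ∃ l, a ∈ evalo (Ol l) c n := by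
  have emono : ∀ l l', l ≤ l' → ∀ (c : OCode) (n a),
      a ∈ evalo (Ol l) c n → a ∈ evalo (Ol l') c n :=
    fun l l' hll c n a => evalo_mono (hmono l l' hll) c n a
  intro c
  induction c with
  | oracle => exact hlim
  | zero => exact fun n a ha => ⟨0, ha⟩
  | succ => exact fun n a ha => ⟨0, ha⟩
  | left => exact fun n a ha => ⟨0, ha⟩
  | right => exact fun n a ha => ⟨0, ha⟩
  | pair cf cg ihf ihg =>
      intro n a ha
      simp only [evalo] at ha ⊢
      simp [Seq.seq] at ha ⊢
      obtain ⟨x, hx, y, hy, rfl⟩ := ha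
      obtain ⟨l1, h1⟩ := ihf _ _ hx
      obtain ⟨l2, h2⟩ := ihg _ _ hy
      exact ⟨max l1 l2, x, emono _ _ (le_max_left _ _) _ _ _ h1, y,
        emono _ _ (le_max_right _ _) _ _ _ h2, rfl⟩
  | comp cf cg ihf ihg =>
      intro n a ha
      simp only [evalo] at ha ⊢
      have ha := Part.mem_bind_iff.1 ha
      suffices H : ∃ l, ∃ x ∈ evalo (Ol l) cg n, a ∈ evalo (Ol l) cf x from
        H.imp fun l h => Part.mem_bind_iff.2 h
      obtain ⟨x, hx, hax⟩ := ha
      obtain ⟨l1, h1⟩ := ihg _ _ hx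
      obtain ⟨l2, h2⟩ := ihf _ _ hax
      exact ⟨max l1 l2, x, emono _ _ (le_max_left _ _) _ _ _ h1,
        emono _ _ (le_max_right _ _) _ _ _ h2⟩
  | prec cf cg ihf ihg =>
      intro n a
      simp only [evalo, Nat.unpaired]
      generalize n.unpair.2 = m
      induction m generalizing a with
      | zero => exact ihf _ a
      | succ m ih =>
          intro ha
          simp only [Part.bind_eq_bind, Part.mem_bind_iff] at ha ⊢
          obtain ⟨i, hi, hia⟩ := ha
          obtain ⟨l1, h1⟩ := ih _ hi
          obtain ⟨l2, h2⟩ := ihg _ _ hia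
          refine ⟨max l1 l2, i, ?_, emono _ _ (le_max_right _ _) _ _ _ h2⟩
          -- lift the inner rec membership: need mono for the rec part
          revert h1
          generalize (Nat.unpair n).1 = aa
          -- inner mono: use evalo_mono on prec code
          intro h1
          have := evalo_mono (hmono l1 (max l1 l2) (le_max_left _ _)) (OCode.prec cf cg)
            (Nat.pair aa m) i
          simp only [evalo, Nat.unpaired, Nat.unpair_pair] at this
          exact this h1
  | rfind cf ihf =>
      intro n a ha
      simp only [evalo] at ha ⊢
      have ha := Nat.mem_rfind.1 ha
      obtain ⟨h1, h2⟩ := ha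
      simp only [Part.map_eq_map, Part.mem_map_iff] at h1
      obtain ⟨x0, hx0, hx00⟩ := h1
      have hx00' : x0 = 0 := by simpa using hx00
      subst hx00'
      set P : ℕ → ℕ → Prop := fun m l =>
        ∃ x, x ∈ evalo (Ol l) cf (Nat.pair n m) ∧ (m = a → x = 0) ∧ (m ≠ a → x ≠ 0) with hP
      have Pmono : ∀ m l l', l ≤ l' → P m l → P m l' := by
        intro m l l' hll ⟨x, hx, hc⟩
        exact ⟨x, emono _ _ hll _ _ _ hx, hc⟩
      have hPm : ∀ m, m ≤ a → ∃ l, P m l := by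
        intro m hm
        rcases eq_or_lt_of_le hm with rfl | hlt
        · obtain ⟨l, hl⟩ := ihf _ _ hx0
          exact ⟨l, 0, hl, fun _ => rfl, fun hne => absurd rfl hne⟩
        · have := h2 hlt
          simp only [Part.map_eq_map, Part.mem_map_iff] at this
          obtain ⟨x, hx, hxf⟩ := this
          have hxne : x ≠ 0 := by simpa using hxf
          obtain ⟨l, hl⟩ := ihf _ _ hx
          exact ⟨l, x, hl, fun he => absurd he (Nat.ne_of_lt hlt), fun _ => hxne⟩
      obtain ⟨L, hL⟩ := exists_uniform_bound Pmono a hPm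
      refine ⟨L, ?_⟩
      refine Nat.mem_rfind.2 ?_
      constructor
      · obtain ⟨x, hx, hc1, _⟩ := hL a le_rfl
        have := hc1 rfl; subst this
        simp only [Part.map_eq_map, Part.mem_map_iff]
        exact ⟨0, hx, by simp⟩
      · intro m hm
        obtain ⟨x, hx, _, hc2⟩ := hL m hm.le
        have hxne := hc2 (Nat.ne_of_lt hm)
        simp only [Part.map_eq_map, Part.mem_map_iff]
        exact ⟨x, hx, by simpa using hxne⟩

private theorem nat_rec_part_congr {b₁ b₂ : Part ℕ} {s₁ s₂ : ℕ → Part ℕ → Part ℕ}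
    (hb : b₁ = b₂) (hs : ∀ y p, s₁ y p = s₂ y p) (n : ℕ) :
    (Nat.rec b₁ (fun y IH => s₁ y IH) n : Part ℕ) = Nat.rec b₂ (fun y IH => s₂ y IH) n := by
  induction n with
  | zero => exact hb
  | succ n ih => rw [show (Nat.rec b₁ (fun y IH => s₁ y IH) (n+1) : Part ℕ)
        = s₁ n (Nat.rec b₁ (fun y IH => s₁ y IH) n) from rfl,
      show (Nat.rec b₂ (fun y IH => s₂ y IH) (n+1) : Part ℕ)
        = s₂ n (Nat.rec b₂ (fun y IH => s₂ y IH) n) from rfl, ih, hs]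

theorem evalo_partrec {R : ℕ → ℕ →. ℕ} (hR : Partrec₂ R) (c : OCode) :
    Partrec₂ fun p n => evalo (R p) c n := by
  induction c with
  | oracle => exact hR
  | zero =>
      exact ((Computable.const 0).partrec.comp Computable.snd).of_eq fun p => rfl
  | succ =>
      exact ((Computable.succ.comp Computable.snd).partrec).of_eq fun p => rfl
  | left =>
      exact (((Computable.fst.comp Computable.unpair).comp Computable.snd).partrec).of_eq
        fun p => rfl
  | right =>
      exact (((Computable.snd.comp Computable.unpair).comp Computable.snd).partrec).of_eq
        fun p => rfl
  | pair cf cg ihf ihg =>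
      have : Partrec fun p : ℕ × ℕ =>
          (evalo (R p.1) cf p.2).bind fun x => (evalo (R p.1) cg p.2).map (Nat.pair x) := by
        exact ihf.bind (((ihg.comp (Computable.fst.comp Computable.fst)
            (Computable.snd.comp Computable.fst)).map
          ((Primrec₂.natPair.comp (Primrec.snd.comp Primrec.fst) Primrec.snd).to_comp).to₂))
      exact this.of_eq fun p => by
        simp [evalo, Seq.seq]
  | comp cf cg ihf ihg =>
      have : Partrec fun p : ℕ × ℕ =>
          (evalo (R p.1) cg p.2).bind fun x => evalo (R p.1) cf x := by
        exact ihg.bind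
          ((ihf.comp (Computable.fst.comp Computable.fst) Computable.snd).to₂)
      exact this.of_eq fun p => by simp [evalo]; rfl
  | prec cf cg ihf ihg =>
      have hf' : Nat.Partrec fun m => evalo (R m.unpair.1) cf m.unpair.2 :=
        Partrec.nat_iff.1 (ihf.comp (Computable.fst.comp Computable.unpair)
          (Computable.snd.comp Computable.unpair))
      have hg' : Nat.Partrec fun m =>
          evalo (R m.unpair.1.unpair.1) cg (Nat.pair m.unpair.1.unpair.2 m.unpair.2) := by
        refine Partrec.nat_iff.1 (ihg.comp ?_ ?_)
        · exact (Computable.fst.comp Computable.unpair).comp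
            (Computable.fst.comp Computable.unpair)
        · exact (Primrec₂.natPair.comp
            (Primrec.snd.comp (Primrec.unpair.comp (Primrec.fst.comp Primrec.unpair)))
            (Primrec.snd.comp Primrec.unpair)).to_comp
      have H := Nat.Partrec.prec hf' hg'
      have hpack : Computable fun p : ℕ × ℕ =>
          Nat.pair (Nat.pair p.1 p.2.unpair.1) p.2.unpair.2 :=
        (Primrec₂.natPair.comp
          (Primrec₂.natPair.comp Primrec.fst (Primrec.fst.comp (Primrec.unpair.comp Primrec.snd)))
          (Primrec.snd.comp (Primrec.unpair.comp Primrec.snd))).to_comp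
      have := (Partrec.nat_iff.2 H).comp hpack
      exact this.of_eq fun p => by
        simp only [evalo, Nat.unpaired, Nat.unpair_pair]
  | rfind cf ihf =>
      have hf' : Nat.Partrec fun m =>
          evalo (R m.unpair.1.unpair.1) cf (Nat.pair m.unpair.1.unpair.2 m.unpair.2) := by
        refine Partrec.nat_iff.1 (ihf.comp ?_ ?_)
        · exact (Computable.fst.comp Computable.unpair).comp
            (Computable.fst.comp Computable.unpair)
        · exact (Primrec₂.natPair.comp
            (Primrec.snd.comp (Primrec.unpair.comp (Primrec.fst.comp Primrec.unpair)))
            (Primrec.snd.comp Primrec.unpair)).to_comp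
      have H := Nat.Partrec.rfind hf'
      have hpack : Computable fun p : ℕ × ℕ => Nat.pair p.1 p.2 :=
        (Primrec₂.natPair.comp Primrec.fst Primrec.snd).to_comp
      have := (Partrec.nat_iff.2 H).comp hpack
      exact this.of_eq fun p => by
        simp only [evalo]
        congr 1
        funext n
        simp [Nat.unpair_pair]

def As (a s x : ℕ) : Bool := (evaln s (Denumerable.ofNat Code a) x).isSome

theorem As_mono {a s s' x : ℕ} (h : s ≤ s') (hx : As a s x = true) : As a s' x = true := by
  simp only [As, Option.isSome_iff_exists] at *
  obtain ⟨y, hy⟩ := hx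
  exact ⟨y, evaln_mono h hy⟩

theorem As_sound {a s x : ℕ} (h : As a s x = true) : (phi a x).Dom := by
  simp only [As, Option.isSome_iff_exists] at h
  obtain ⟨y, hy⟩ := h
  exact Part.dom_iff_mem.2 ⟨y, evaln_sound hy⟩

theorem As_complete {a x : ℕ} (h : (phi a x).Dom) : ∃ s, As a s x = true := by
  rw [Part.dom_iff_mem] at h
  obtain ⟨y, hy⟩ := h
  obtain ⟨s, hs⟩ := evaln_complete.1 hy
  exact ⟨s, by simp only [As, Option.isSome_iff_exists]; exact ⟨y, hs⟩⟩

theorem exist_stage (a : ℕ) : ∀ l, ∃ s, ∀ x, x < l → (phi a x).Dom → As a s x = true := by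
  intro l
  induction l with
  | zero => exact ⟨0, fun x hx => absurd hx (Nat.not_lt_zero x)⟩
  | succ l ih =>
      obtain ⟨s, hs⟩ := ih
      by_cases hd : (phi a l).Dom
      · obtain ⟨s', hs'⟩ := As_complete hd
        refine ⟨max s s', fun x hx hxd => ?_⟩
        rcases Nat.lt_succ_iff_lt_or_eq.1 hx with h' | h'
        · exact As_mono (le_max_left _ _) (hs x h' hxd)
        · exact h' ▸ As_mono (le_max_right _ _) hs'
      · refine ⟨s, fun x hx hxd => ?_⟩
        rcases Nat.lt_succ_iff_lt_or_eq.1 hx with h' | h'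
        · exact hs x h' hxd
        · exact absurd (h' ▸ hxd) hd

def Oapprox (a p : ℕ) : ℕ →. ℕ :=
  fun x => if x < p.unpair.1 then Part.some (if As a p.unpair.2 x then 1 else 0) else Part.none

theorem As_primrec (a : ℕ) : Primrec₂ (fun s x => As a s x) := by
  unfold As
  exact Primrec.option_isSome.comp
    (primrec_evaln.comp (((Primrec.fst).pair
      (Primrec.const (Denumerable.ofNat Code a))).pair Primrec.snd))

theorem Oapprox_partrec (a : ℕ) : Partrec₂ (Oapprox a) := by
  have h1 : Computable₂ (fun p x : ℕ => if x < p.unpair.1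
      then some (if As a p.unpair.2 x then 1 else 0) else (none : Option ℕ)) := by
    refine Primrec₂.to_comp ?_
    refine Primrec.ite ?_ (Primrec.option_some.comp (Primrec.ite ?_ (Primrec.const 1) (Primrec.const 0))) (Primrec.const none)
    · exact Primrec.nat_lt.comp Primrec.snd (Primrec.fst.comp (Primrec.unpair.comp Primrec.fst))
    · exact Primrec.eq.comp ((As_primrec a).comp
        (Primrec.snd.comp (Primrec.unpair.comp Primrec.fst)) Primrec.snd) (Primrec.const true)
  have := Computable.ofOption (h1 : Computable _)
  refine Partrec.of_eq this fun p => ?_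
  simp only [Oapprox]
  by_cases h : p.2 < p.1.unpair.1 <;> simp [h, Part.ofOption]

section
variable (dcd : Code)

noncomputable def Fψ : Code → ℕ →. ℕ := fun cod m =>
  (Nat.rfind fun t => Part.some ((evaln t (Denumerable.ofNat Code m.unpair.1) m.unpair.1).isSome))
    >>= fun u =>
  dcd.eval (Nat.pair (Nat.pair u u) (Encodable.encode (cod.curry m.unpair.1))) >>= fun w =>
  (Denumerable.ofNat Code w).eval m.unpair.2

theorem Fψ_partrec : Partrec₂ (Fψ dcd) := by
  have h1 : Partrec fun p : Code × ℕ =>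
      Nat.rfind fun t => Part.some
        ((evaln t (Denumerable.ofNat Code p.2.unpair.1) p.2.unpair.1).isSome) := by
    apply Partrec.rfind
    have : Computable₂ fun (p : Code × ℕ) (t : ℕ) =>
        ((evaln t (Denumerable.ofNat Code p.2.unpair.1) p.2.unpair.1).isSome : Bool) := by
      refine Primrec₂.to_comp ?_
      exact Primrec.option_isSome.comp (primrec_evaln.comp
        ((Primrec.snd.pair ((Primrec.ofNat Code).comp
          (Primrec.fst.comp (Primrec.unpair.comp (Primrec.snd.comp Primrec.fst))))).pair
          (Primrec.fst.comp (Primrec.unpair.comp (Primrec.snd.comp Primrec.fst)))))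
    exact (this.partrec₂).of_eq fun p => by simp
  have h2 : Partrec fun q : (Code × ℕ) × ℕ =>
      dcd.eval (Nat.pair (Nat.pair q.2 q.2) (Encodable.encode (q.1.1.curry q.1.2.unpair.1))) := by
    refine eval_part.comp (Computable.const dcd) ?_
    refine Primrec.to_comp ?_
    exact Primrec₂.natPair.comp (Primrec₂.natPair.comp Primrec.snd Primrec.snd)
      (Primrec.encode.comp (primrec₂_curry.comp (Primrec.fst.comp Primrec.fst)
        (Primrec.fst.comp (Primrec.unpair.comp (Primrec.snd.comp Primrec.fst)))))
  have h3 : Partrec fun r : ((Code × ℕ) × ℕ) × ℕ =>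
      (Denumerable.ofNat Code r.2).eval r.1.1.2.unpair.2 := by
    refine eval_part.comp ((Computable.ofNat Code).comp Computable.snd) ?_
    exact Primrec.to_comp (Primrec.snd.comp (Primrec.unpair.comp
      (Primrec.snd.comp (Primrec.fst.comp Primrec.fst))))
  exact (h1.bind ((h2.bind h3.to₂).to₂))
end



theorem fpfF_recIn_Khalt : RecursiveInSingle (charFn Khalt) (fun n => Part.some (fpfF n)) := by
  have h1 : RecursiveInSingle (charFn Khalt) (fun n => charFn Khalt (hcode n)) :=
    RecursiveInSingle.oracle.comp_computable hcode_computable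
  have hpost : Computable (fun b : ℕ =>
      if b = 1 then Encodable.encode dcode else Encodable.encode Code.zero) := by
    refine Primrec.to_comp ?_
    exact Primrec.ite (Primrec.eq.comp Primrec.id (Primrec.const 1))
      (Primrec.const _) (Primrec.const _)
  have := h1.map_computable hpost
  refine this.of_eq fun n => ?_
  by_cases h : hcode n ∈ Khalt <;> simp [charFn, fpfF, h]

set_option maxHeartbeats 2000000 in
theorem hard_dir (A : Set ℕ) (hce : ∃ e, W e = A) (f : ℕ → ℕ)
    (hfA : FunRecIn A f) (hfpf : ∀ n, W (f n) ≠ W n) : TuringRed Khalt A := by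
  classical
  obtain ⟨a, hWa⟩ := hce
  obtain ⟨c, hc⟩ := exists_ocode hfA
  have hmemA : ∀ x, x ∈ A ↔ (phi a x).Dom := fun x => by rw [← hWa]; exact Iff.rfl
  -- a plain code for the oracle-approximation evaluation
  have hD : Nat.Partrec fun m : ℕ => evalo (Oapprox a m.unpair.1) c m.unpair.2 :=
    Partrec.nat_iff.1 ((evalo_partrec (Oapprox_partrec a) c).comp
      (Computable.fst.comp Computable.unpair) (Computable.snd.comp Computable.unpair))
  obtain ⟨dcd, hdcd⟩ := exists_code.1 hD
  have hdcd' : ∀ p n, dcd.eval (Nat.pair p n) = evalo (Oapprox a p) c n := fun p n => by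
    rw [hdcd]; simp [Nat.unpair_pair]
  -- the recursion-theorem fixed point
  obtain ⟨c₀, hc₀⟩ := fixed_point₂ (Fψ_partrec dcd)
  set e : ℕ → ℕ := fun k => Encodable.encode (c₀.curry k) with he_def
  have he_prim : Primrec e := Primrec.encode.comp (primrec₂_curry.comp (Primrec.const c₀) Primrec.id)
  have hphi_e : ∀ k x, phi (e k) x =
      (Nat.rfind fun t => Part.some ((evaln t (Denumerable.ofNat Code k) k).isSome))
        >>= fun u =>
      dcd.eval (Nat.pair (Nat.pair u u) (e k)) >>= fun w =>
      (Denumerable.ofNat Code w).eval x := by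
    intro k x
    have h1 : phi (e k) x = Code.eval c₀ (Nat.pair k x) := by
      simp only [phi, he_def, Denumerable.ofNat_encode, eval_curry]
    rw [h1, hc₀]
    simp only [Fψ, Nat.unpair_pair]
    rfl
  -- semantic predicates
  set cond2 : ℕ → ℕ → Prop := fun l s₂ => ∀ x, x < l → x ∈ A → As a s₂ x = true with hcond2_def
  set cond1b : ℕ → Bool := fun m => decide
      (evaln m.unpair.2.unpair.2.unpair.1 dcd
        (Nat.pair (Nat.pair m.unpair.2.unpair.1 m.unpair.2.unpair.2.unpair.2)
          (e m.unpair.1.unpair.1)) = some m.unpair.1.unpair.2) with hcond1b_def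
  -- oracle monotonicity for approximations (K1-i)
  have hOmono : ∀ l s₂ u, cond2 l s₂ → l ≤ u → s₂ ≤ u →
      ∀ x y, y ∈ Oapprox a (Nat.pair l s₂) x → y ∈ Oapprox a (Nat.pair u u) x := by
    intro l s₂ u h2 hlu hsu x y hy
    simp only [Oapprox, Nat.unpair_pair] at hy ⊢
    by_cases hx : x < l
    · rw [if_pos hx] at hy
      rw [if_pos (lt_of_lt_of_le hx hlu)]
      have : As a u x = As a s₂ x := by
        by_cases hs : As a s₂ x = true
        · rw [hs, As_mono hsu hs]
        · have : ¬ As a u x = true := by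
            intro hu
            exact hs (h2 x hx ((hmemA x).2 (As_sound hu)))
          rw [Bool.not_eq_true] at this hs
          rw [this, hs]
      rwa [this]
    · rw [if_neg hx] at hy
      exact absurd hy (Part.notMem_none y)
  -- existence of a search witness (K2)
  have hex : ∀ k, ∃ s : ℕ,
      (evaln s.unpair.2.unpair.1 dcd
        (Nat.pair (Nat.pair s.unpair.1 s.unpair.2.unpair.2) (e k)) = some (f (e k)))
      ∧ cond2 s.unpair.1 s.unpair.2.unpair.2 := by
    intro k
    have hv : f (e k) ∈ evalo (charFn A) c (e k) := by
      rw [hc]; exact Part.mem_some _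
    obtain ⟨l, hvl⟩ := evalo_compact
      (Ol := fun l => fun x => if x < l then charFn A x else Part.none)
      (fun l l' hll' n b hb => by
        by_cases hn : n < l
        · rw [if_pos hn] at hb; rw [if_pos (lt_of_lt_of_le hn hll')]; exact hb
        · rw [if_neg hn] at hb; exact absurd hb (Part.notMem_none b))
      (fun n b hb => ⟨n + 1, by simp only [if_pos (Nat.lt_succ_self n)]; exact hb⟩)
      c (e k) (f (e k)) hv
    obtain ⟨s₂, hs₂⟩ := exist_stage a l
    have h2 : cond2 l s₂ := fun x hx hxA => hs₂ x hx ((hmemA x).1 hxA)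
    have hOeq : Oapprox a (Nat.pair l s₂) = fun x => if x < l then charFn A x else Part.none := by
      funext x
      simp only [Oapprox, Nat.unpair_pair]
      by_cases hx : x < l
      · rw [if_pos hx, if_pos hx, charFn]
        congr 1
        by_cases hxA : x ∈ A
        · rw [if_pos hxA, if_pos (h2 x hx hxA)]
        · rw [if_neg hxA, if_neg ?_]
          intro hAs
          exact hxA ((hmemA x).2 (As_sound hAs))
      · rw [if_neg hx, if_neg hx]
    have hv2 : f (e k) ∈ dcd.eval (Nat.pair (Nat.pair l s₂) (e k)) := by
      rw [hdcd', hOeq]; exact hvl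
    obtain ⟨t, ht⟩ := evaln_complete.1 hv2
    refine ⟨Nat.pair l (Nat.pair t s₂), ?_, ?_⟩
    · simp only [Nat.unpair_pair]; exact ht
    · simp only [Nat.unpair_pair]; exact h2
  -- the key correctness claim (K3)
  have hkey : ∀ (k s : ℕ),
      (evaln s.unpair.2.unpair.1 dcd
        (Nat.pair (Nat.pair s.unpair.1 s.unpair.2.unpair.2) (e k)) = some (f (e k)))
      → cond2 s.unpair.1 s.unpair.2.unpair.2
      → ((evaln (max s.unpair.1 s.unpair.2.unpair.2)
            (Denumerable.ofNat Code k) k).isSome = true ↔ k ∈ Khalt) := by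
    intro k s h1 h2
    set l := s.unpair.1
    set t := s.unpair.2.unpair.1
    set s₂ := s.unpair.2.unpair.2
    set b := max l s₂ with hb_def
    constructor
    · intro hbit
      rw [Option.isSome_iff_exists] at hbit
      obtain ⟨y, hy⟩ := hbit
      exact Part.dom_iff_mem.2 ⟨y, evaln_sound hy⟩
    · intro hK
      by_contra hbit
      -- k enters Khalt only after stage b
      have hKt : ∃ t', (evaln t' (Denumerable.ofNat Code k) k).isSome = true := by
        obtain ⟨y, hy⟩ := Part.dom_iff_mem.1 hK
        obtain ⟨t', ht'⟩ := evaln_complete.1 hy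
        exact ⟨t', by rw [Option.isSome_iff_exists]; exact ⟨y, ht'⟩⟩
      set u := Nat.find hKt with hu_def
      have hu_spec := Nat.find_spec hKt
      have hub : b < u := by
        rcases Nat.lt_or_ge b u with h | h
        · exact h
        · exfalso
          apply hbit
          rw [Option.isSome_iff_exists] at hu_spec ⊢
          obtain ⟨y, hy⟩ := hu_spec
          exact ⟨y, evaln_mono h hy⟩
      -- the rfind inside phi (e k) returns u
      have hrfind : (Nat.rfind fun t' => Part.some
          ((evaln t' (Denumerable.ofNat Code k) k).isSome)) = Part.some u := by
        rw [Part.eq_some_iff]; refine Nat.mem_rfind.2 ?_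
        constructor
        · rw [hu_spec]; exact Part.mem_some _
        · intro m hm
          have := Nat.find_min hKt hm
          rw [Bool.not_eq_true] at this
          rw [this]; exact Part.mem_some _
      -- at stage (u,u) the approximation computes f (e k)
      have heval_u : dcd.eval (Nat.pair (Nat.pair u u) (e k)) = Part.some (f (e k)) := by
        rw [Part.eq_some_iff]
        have hm1 : f (e k) ∈ dcd.eval (Nat.pair (Nat.pair l s₂) (e k)) := evaln_sound h1
        rw [hdcd'] at hm1 ⊢
        exact evalo_mono (hOmono l s₂ u h2
          (le_of_lt (lt_of_le_of_lt (le_max_left _ _) hub))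
          (le_of_lt (lt_of_le_of_lt (le_max_right _ _) hub))) c (e k) (f (e k)) hm1
      -- hence W (e k) = W (f (e k)), contradicting fixed-point-freeness
      have hsame : ∀ x, phi (e k) x = phi (f (e k)) x := by
        intro x
        rw [hphi_e k x, hrfind]
        simp only [Part.bind_eq_bind, Part.bind_some]
        rw [heval_u]
        simp only [Part.bind_some]
        rfl
      have hWW : W (e k) = W (f (e k)) := by
        ext z
        simp only [W, Set.mem_setOf_eq, hsame z]
      exact hfpf (e k) hWW.symm

  -- ===== the oracle program computing charFn Khalt =====
  -- β: bounded quantifier over the oracle, by primitive recursion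
  set G0 : ℕ →. ℕ := fun m => (charFn A m.unpair.2.unpair.1).map (fun bb =>
      if m.unpair.2.unpair.2 = 1 ∧ (bb = 0 ∨ As a m.unpair.1 m.unpair.2.unpair.1 = true)
      then 1 else 0) with hG0_def
  have hβG : RecursiveInSingle (charFn A) G0 := by
    have s1 : RecursiveInSingle (charFn A) (fun m => charFn A m.unpair.2.unpair.1) :=
      RecursiveInSingle.oracle.comp_computable
        (Primrec.to_comp (Primrec.fst.comp (Primrec.unpair.comp
          (Primrec.snd.comp Primrec.unpair))))
    have s2 := RecursiveInSingle.pair (RecursiveInSingle.of_computable Computable.id) s1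
    have hfin : Computable (fun q : ℕ =>
        if q.unpair.1.unpair.2.unpair.2 = 1 ∧ (q.unpair.2 = 0 ∨
          As a q.unpair.1.unpair.1 q.unpair.1.unpair.2.unpair.1 = true) then 1 else 0) := by
      refine Primrec.to_comp ?_
      have e1 : Primrec fun q : ℕ => q.unpair.1.unpair.2.unpair.2 :=
        Primrec.snd.comp (Primrec.unpair.comp (Primrec.snd.comp
          (Primrec.unpair.comp (Primrec.fst.comp Primrec.unpair))))
      have e2 : Primrec fun q : ℕ => q.unpair.2 := Primrec.snd.comp Primrec.unpair
      have e3 : Primrec fun q : ℕ => q.unpair.1.unpair.1 :=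
        Primrec.fst.comp (Primrec.unpair.comp (Primrec.fst.comp Primrec.unpair))
      have e4 : Primrec fun q : ℕ => q.unpair.1.unpair.2.unpair.1 :=
        Primrec.fst.comp (Primrec.unpair.comp (Primrec.snd.comp
          (Primrec.unpair.comp (Primrec.fst.comp Primrec.unpair))))
      refine Primrec.ite ?_ (Primrec.const 1) (Primrec.const 0)
      refine PrimrecPred.and ?_ (PrimrecPred.or ?_ ?_)
      · exact Primrec.eq.comp e1 (Primrec.const 1)
      · exact Primrec.eq.comp e2 (Primrec.const 0)
      · exact Primrec.eq.comp ((As_primrec a).comp e3 e4) (Primrec.const true)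
    have s3 := s2.map_computable hfin
    refine s3.of_eq fun m => ?_
    rw [hG0_def]
    simp only [charFn, Seq.seq, Part.map_eq_map, Part.bind_eq_bind, Part.map_some,
      Part.bind_some, Nat.unpair_pair, id_eq]
  have hPR := RecursiveInSingle.prec
    (RecursiveInSingle.of_computable (O := charFn A) (Computable.const 1)) hβG
  set βval : ℕ → ℕ → ℕ := fun s₂ l => if cond2 l s₂ then 1 else 0 with hβval_def
  have hrec : ∀ s₂ l : ℕ, (Nat.rec (Part.some 1)
      (fun y IH => IH >>= fun i => G0 (Nat.pair s₂ (Nat.pair y i))) l : Part ℕ)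
      = Part.some (βval s₂ l) := by
    intro s₂ l
    induction l with
    | zero =>
        have h0 : cond2 0 s₂ := fun x hx => absurd hx (Nat.not_lt_zero x)
        show Part.some 1 = Part.some (βval s₂ 0)
        rw [hβval_def]
        simp only [if_pos h0]
    | succ l ih =>
        rw [show (Nat.rec (Part.some 1)
            (fun y IH => IH >>= fun i => G0 (Nat.pair s₂ (Nat.pair y i))) (l+1) : Part ℕ)
          = (Nat.rec (Part.some 1)
            (fun y IH => IH >>= fun i => G0 (Nat.pair s₂ (Nat.pair y i))) l : Part ℕ)
              >>= (fun i => G0 (Nat.pair s₂ (Nat.pair l i))) from rfl, ih]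
        rw [hG0_def]
        simp only [Part.bind_eq_bind, Part.bind_some, charFn, Part.map_eq_map,
          Part.map_some, Nat.unpair_pair]
        congr 1
        by_cases h2 : cond2 (l+1) s₂
        · have h2l : cond2 l s₂ := fun x hx hxA => h2 x (Nat.lt_succ_of_lt hx) hxA
          have hl1 : βval s₂ l = 1 := if_pos h2l
          have hAs : l ∈ A → As a s₂ l = true := h2 l (Nat.lt_succ_self l)
          rw [show βval s₂ (l+1) = 1 from if_pos h2]
          by_cases hlA : l ∈ A
          · simp [hl1, hAs hlA, hlA]
          · simp [hl1, hlA]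
        · rw [show βval s₂ (l+1) = 0 from if_neg h2]
          by_cases h2l : cond2 l s₂
          · have hfail : l ∈ A ∧ ¬ As a s₂ l = true := by
              by_contra hcon
              apply h2
              intro x hx hxA
              rcases Nat.lt_succ_iff_lt_or_eq.1 hx with h' | h'
              · exact h2l x h' hxA
              · subst h'
                by_contra hAs
                exact hcon ⟨hxA, hAs⟩
            obtain ⟨hlA, hAs⟩ := hfail
            have hl1 : βval s₂ l = 1 := if_pos h2l
            simp [hl1, hlA, hAs]
          · have hl0 : βval s₂ l = 0 := if_neg h2l
            simp [hl0]
  have hPR_val : ∀ z : ℕ, (Nat.unpaired fun s₂ n =>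
      n.rec ((fun _ : ℕ => Part.some 1) s₂) (fun y IH => do
        let i ← IH
        G0 (Nat.pair s₂ (Nat.pair y i)))) z
      = Part.some (βval z.unpair.1 z.unpair.2) := by
    intro z
    simp only [Nat.unpaired]
    exact hrec z.unpair.1 z.unpair.2
  -- search predicate
  have hregroup : Computable (fun m : ℕ =>
      Nat.pair m.unpair.2.unpair.2.unpair.2 m.unpair.2.unpair.1) := by
    refine Primrec.to_comp ?_
    exact Primrec₂.natPair.comp
      (Primrec.snd.comp (Primrec.unpair.comp (Primrec.snd.comp
        (Primrec.unpair.comp (Primrec.snd.comp Primrec.unpair)))))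
      (Primrec.fst.comp (Primrec.unpair.comp (Primrec.snd.comp Primrec.unpair)))
  have hq1 := hPR.comp_computable hregroup
  have hq2 := RecursiveInSingle.pair (RecursiveInSingle.of_computable Computable.id) hq1
  have hcond1b_prim : Primrec cond1b := by
    rw [hcond1b_def]
    have e1 : Primrec fun m : ℕ => m.unpair.2.unpair.2.unpair.1 :=
      Primrec.fst.comp (Primrec.unpair.comp (Primrec.snd.comp
        (Primrec.unpair.comp (Primrec.snd.comp Primrec.unpair))))
    have e2 : Primrec fun m : ℕ => m.unpair.2.unpair.1 :=
      Primrec.fst.comp (Primrec.unpair.comp (Primrec.snd.comp Primrec.unpair))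
    have e3 : Primrec fun m : ℕ => m.unpair.2.unpair.2.unpair.2 :=
      Primrec.snd.comp (Primrec.unpair.comp (Primrec.snd.comp
        (Primrec.unpair.comp (Primrec.snd.comp Primrec.unpair))))
    have e4 : Primrec fun m : ℕ => m.unpair.1.unpair.1 :=
      Primrec.fst.comp (Primrec.unpair.comp (Primrec.fst.comp Primrec.unpair))
    have e5 : Primrec fun m : ℕ => m.unpair.1.unpair.2 :=
      Primrec.snd.comp (Primrec.unpair.comp (Primrec.fst.comp Primrec.unpair))
    exact primrecPred_iff_primrec_decide.1 <| Primrec.eq.comp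
      (primrec_evaln.comp ((e1.pair (Primrec.const dcd)).pair
        (Primrec₂.natPair.comp (Primrec₂.natPair.comp e2 e3) (he_prim.comp e4))))
      (Primrec.option_some.comp e5)
  have hqfin : Computable (fun q : ℕ =>
      if cond1b q.unpair.1 = true ∧ q.unpair.2 = 1 then 0 else 1) := by
    refine Primrec.to_comp ?_
    refine Primrec.ite (PrimrecPred.and ?_ ?_) (Primrec.const 0) (Primrec.const 1)
    · exact Primrec.eq.comp (hcond1b_prim.comp (Primrec.fst.comp Primrec.unpair))
        (Primrec.const true)
    · exact Primrec.eq.comp (Primrec.snd.comp Primrec.unpair) (Primrec.const 1)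
  have hq3 := hq2.map_computable hqfin
  have hq : RecursiveInSingle (charFn A) (fun m : ℕ => Part.some
      (if cond1b m = true ∧ cond2 m.unpair.2.unpair.1 m.unpair.2.unpair.2.unpair.2
       then 0 else 1)) := by
    refine hq3.of_eq fun m => ?_
    simp only [id_eq]
    rw [show ∀ p : Part ℕ, (Nat.pair <$> Part.some m <*> p) = p.map (Nat.pair m)
      from fun p => by simp [Seq.seq]]
    rw [hPR_val (Nat.pair m.unpair.2.unpair.2.unpair.2 m.unpair.2.unpair.1)]
    simp only [Part.map_eq_map, Part.map_some, Nat.unpair_pair]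
    congr 1
    have hβiff : βval m.unpair.2.unpair.2.unpair.2 m.unpair.2.unpair.1 = 1
        ↔ cond2 m.unpair.2.unpair.1 m.unpair.2.unpair.2.unpair.2 := by
      rw [hβval_def]
      by_cases h : cond2 m.unpair.2.unpair.1 m.unpair.2.unpair.2.unpair.2 <;> simp [h]
    by_cases h1 : cond1b m = true <;> by_cases h2 : cond2 m.unpair.2.unpair.1
        m.unpair.2.unpair.2.unpair.2 <;>
      simp [h1, h2, hβiff]
  have hR := RecursiveInSingle.rfind hq
  have hS := RecursiveInSingle.pair (RecursiveInSingle.of_computable Computable.id) hR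
  have hP1 : RecursiveInSingle (charFn A) (fun k => Part.some (Nat.pair k (f (e k)))) :=
    RecursiveInSingle.pair_pure (RecursiveInSingle.of_computable Computable.id)
      (hfA.comp_computable he_prim.to_comp)
  have hT := RecursiveInSingle.comp hS hP1
  have hfinc : Computable (fun q : ℕ =>
      if (evaln (max q.unpair.2.unpair.1 q.unpair.2.unpair.2.unpair.2)
          (Denumerable.ofNat Code q.unpair.1.unpair.1) q.unpair.1.unpair.1).isSome = true
      then 1 else 0) := by
    refine Primrec.to_comp ?_
    have e1 : Primrec fun q : ℕ => q.unpair.2.unpair.1 :=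
      Primrec.fst.comp (Primrec.unpair.comp (Primrec.snd.comp Primrec.unpair))
    have e2 : Primrec fun q : ℕ => q.unpair.2.unpair.2.unpair.2 :=
      Primrec.snd.comp (Primrec.unpair.comp (Primrec.snd.comp
        (Primrec.unpair.comp (Primrec.snd.comp Primrec.unpair))))
    have e3 : Primrec fun q : ℕ => q.unpair.1.unpair.1 :=
      Primrec.fst.comp (Primrec.unpair.comp (Primrec.fst.comp Primrec.unpair))
    refine Primrec.ite ?_ (Primrec.const 1) (Primrec.const 0)
    refine Primrec.eq.comp ?_ (Primrec.const true)
    exact Primrec.option_isSome.comp (primrec_evaln.comp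
      (((Primrec.nat_max.comp e1 e2).pair ((Primrec.ofNat Code).comp e3)).pair e3))
  have hFinal := hT.map_computable hfinc
  show RecursiveInSingle (charFn A) (charFn Khalt)
  refine hFinal.of_eq fun k => ?_
  -- pointwise evaluation
  have hCex : ∃ s : ℕ, cond1b (Nat.pair (Nat.pair k (f (e k))) s) = true
      ∧ cond2 s.unpair.1 s.unpair.2.unpair.2 := by
    obtain ⟨s, hs1, hs2⟩ := hex k
    refine ⟨s, ?_, hs2⟩
    rw [hcond1b_def]
    simp only [Nat.unpair_pair]
    exact decide_eq_true hs1
  set sbar := Nat.find hCex with hsbar_def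
  obtain ⟨hc1bar, hc2bar⟩ := Nat.find_spec hCex
  have habar : (Nat.pair (Nat.pair k (f (e k))) sbar).unpair.2 = sbar := by
    simp [Nat.unpair_pair]
  have hc1bar' : evaln sbar.unpair.2.unpair.1 dcd
      (Nat.pair (Nat.pair sbar.unpair.1 sbar.unpair.2.unpair.2) (e k))
      = some (f (e k)) := by
    have h := of_decide_eq_true hc1bar
    simpa only [Nat.unpair_pair] using h
  have hbit := hkey k sbar hc1bar' hc2bar
  -- compute the chain
  have hrfind2 : (Nat.rfind fun s => (fun m => m = 0) <$>
      (fun m : ℕ => Part.some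
        (if cond1b m = true ∧ cond2 m.unpair.2.unpair.1 m.unpair.2.unpair.2.unpair.2
         then 0 else 1)) (Nat.pair (Nat.pair k (f (e k))) s)) = Part.some sbar := by
    rw [Part.eq_some_iff]; refine Nat.mem_rfind.2 ?_
    constructor
    · simp only [Part.map_eq_map, Part.map_some, Nat.unpair_pair]
      rw [if_pos ⟨hc1bar, hc2bar⟩]
      simp
    · intro m hm
      have hmin := Nat.find_min hCex hm
      simp only [Part.map_eq_map, Part.map_some, Nat.unpair_pair]
      rw [if_neg ?_]
      · simp
      · intro hcon
        exact hmin ⟨hcon.1, hcon.2⟩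
  change _ = Part.some (if k ∈ Khalt then (1:ℕ) else 0)
  simp only [Part.bind_eq_bind, Part.bind_some, id_eq]
  rw [show ∀ p : Part ℕ, (Nat.pair <$> Part.some (Nat.pair k (f (e k))) <*> p)
      = p.map (Nat.pair (Nat.pair k (f (e k)))) from fun p => by simp [Seq.seq]]
  rw [hrfind2]
  simp only [Part.map_eq_map, Part.map_some, Nat.unpair_pair]
  by_cases hK : k ∈ Khalt
  · rw [if_pos (hbit.2 hK), if_pos hK]
  · rw [if_neg ?_, if_neg hK]
    intro hcon
    exact hK (hbit.1 hcon)

/-- A c.e. set is Turing complete iff it computes a fixed point free function. -/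
theorem ce_complete_iff_computes_fpf (A : Set ℕ) (hce : ∃ e : ℕ, W e = A) :
    TuringRed Khalt A ↔ ∃ f : ℕ → ℕ, FunRecIn A f ∧ ∀ n : ℕ, W (f n) ≠ W n := by
  constructor
  · intro h
    exact ⟨fpfF, RecursiveInSingle.trans fpfF_recIn_Khalt h, fpfF_fpf⟩
  · rintro ⟨f, hfA, hfpf⟩
    exact hard_dir A hce f hfA hfpf
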